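/- A graph is cop-win if and only if it has finite corner rank. Moreover, if G is an r-cop-win graph (r ∈ {0,1}) with finite corner rank α ≥ 2, then capt(G) = α − r. -/

import Mathlib

open Classical

/-- A finite reflexive graph: adjacency is symmetric and every vertex is
adjacent to itself (closed neighborhood `N[v] = {u | Adj v u}`). -/
structure RefGraph (V : Type*) where
  Adj : V → V → Prop
  symm : ∀ u v, Adj u v → Adj v u
  refl : ∀ v, Adj v v

namespace RefGraph

variable {V : Type*}

/-- `w` strictly corners `v` within the induced subgraph on `S`,
i.e. `N_S[v] ⊊ N_S[w]`. -/
def StrictCornersIn (G : RefGraph V) (S : Set V) (w v : V) : Prop :=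
  w ∈ S ∧ v ∈ S ∧ (∀ u ∈ S, G.Adj v u → G.Adj w u) ∧ ∃ u ∈ S, G.Adj w u ∧ ¬ G.Adj v u

/-- `v` is a strict corner of the induced subgraph on `S`. -/
def IsStrictCorner (G : RefGraph V) (S : Set V) (v : V) : Prop :=
  ∃ w, G.StrictCornersIn S w v

/-- `S` induces a clique. -/
def IsCliqueSet (G : RefGraph V) (S : Set V) : Prop :=
  ∀ u ∈ S, ∀ v ∈ S, G.Adj u v

/-- `lvl k` is the vertex set of the graph `G_{k+1}` of the corner ranking
procedure: start with all vertices and repeatedly delete all strict corners. -/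
def lvl (G : RefGraph V) : ℕ → Set V
  | 0 => Set.univ
  | k + 1 => {v ∈ G.lvl k | ¬ G.IsStrictCorner (G.lvl k) v}

/-- The corner rank of a vertex: the stage (1-indexed) at which it is a strict
corner, or at which the remaining graph is a clique; `∞` if neither ever occurs. -/
noncomputable def cr (G : RefGraph V) (v : V) : ℕ∞ :=
  sInf {n : ℕ∞ | ∃ m : ℕ, n = (m : ℕ∞) + 1 ∧ v ∈ G.lvl m ∧
    (G.IsStrictCorner (G.lvl m) v ∨ G.IsCliqueSet (G.lvl m))}

/-- The vertex set of `Gₖ`: the vertices of corner rank at least `k`. -/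
def GkSet (G : RefGraph V) (k : ℕ) : Set V := {v | (k : ℕ∞) ≤ G.cr v}

/-- The corner rank of the graph: the largest corner rank of a vertex. -/
noncomputable def crGraph (G : RefGraph V) [Fintype V] : ℕ∞ :=
  Finset.univ.sup fun v => G.cr v

/-- The projection map `fₖ` on a single vertex `u` of `Gₖ`. -/
noncomputable def fk (G : RefGraph V) (k : ℕ) (u : V) : Set V :=
  if (k : ℕ∞) < G.cr u then {u}
  else {w | w ∈ G.GkSet (k + 1) ∧ G.StrictCornersIn (G.GkSet k) w u}

/-- The projection map `Fₖ`: `F₁` is the identity and `Fₖ₊₁ = fₖ ∘ Fₖ`. -/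
noncomputable def Fk (G : RefGraph V) : ℕ → V → Set V
  | 0, v => {v}
  | 1, v => {v}
  | k + 2, v => ⋃ u ∈ G.Fk (k + 1) v, G.fk (k + 1) u

/-- `r` is `k`-cornered by `c`: for `k = 0`, `c = r`; for `k ≥ 1`, some
`r' ∈ Fₖ(r)` is cornered by `c` in the subgraph induced by `V(Gₖ) ∪ {c}`. -/
def kCornered (G : RefGraph V) : ℕ → V → V → Prop
  | 0, c, r => c = r
  | k + 1, c, r => ∃ r' ∈ G.Fk (k + 1) r,
      ∀ u, (u ∈ G.GkSet (k + 1) ∨ u = c) → G.Adj r' u → G.Adj c u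

/-- With the cop at `c`, the vertex `r` is `k`-proj-safe: `cr r ≥ k` and some
`c' ∈ Fₖ(c)` is not adjacent to `r`. -/
def ProjSafe (G : RefGraph V) (k : ℕ) (c r : V) : Prop :=
  (k : ℕ∞) ≤ G.cr r ∧ ∃ c' ∈ G.Fk k c, ¬ G.Adj c' r

/-- The cop at `c` can win within `k` cop moves against the robber at `r`,
robber to move. -/
def WinWithin (G : RefGraph V) : ℕ → V → V → Prop
  | 0, c, r => c = r
  | k + 1, c, r => c = r ∨ ∀ r₁, G.Adj r r₁ → ∃ c₁, G.Adj c c₁ ∧ G.WinWithin k c₁ r₁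

/-- The cop at `c` can guarantee catching the robber at `r` within `n` cop
moves, cop to move. -/
def CanCatch (G : RefGraph V) : ℕ → V → V → Prop
  | 0, c, r => c = r
  | n + 1, c, r => c = r ∨ ∃ c', G.Adj c c' ∧
      (c' = r ∨ ∀ r', G.Adj r r' → G.CanCatch n c' r')

/-- The cop has a winning strategy: some initial placement from which she can
guarantee capture in some bounded number of moves, whatever the robber does. -/
def CopWin (G : RefGraph V) : Prop :=
  ∃ (n : ℕ) (c₀ : V), ∀ r₀ : V, G.CanCatch n c₀ r₀

/-- The capture time: the least `n` such that the cop has an initial placement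
guaranteeing capture within `n` cop moves. -/
noncomputable def capt (G : RefGraph V) : ℕ :=
  sInf {n : ℕ | ∃ c₀ : V, ∀ r₀ : V, G.CanCatch n c₀ r₀}

/-- A graph of finite corner rank `α` is `1`-cop-win if some vertex of corner
rank `α` is adjacent to every vertex of `G_{α-1}`. -/
def OneCopWin (G : RefGraph V) (α : ℕ) : Prop :=
  ∃ x, G.cr x = (α : ℕ∞) ∧ ∀ u, ((α - 1 : ℕ) : ℕ∞) ≤ G.cr u → G.Adj x u

/-- `r`-cop-win for `r ∈ {0,1}`. -/
def RCopWin (G : RefGraph V) (r α : ℕ) : Prop :=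
  (r = 1 ∧ G.OneCopWin α) ∨ (r = 0 ∧ ¬ G.OneCopWin α)

/-- The largest finite corner rank occurring in `G` (0 if none occurs). -/
noncomputable def gammaMax (G : RefGraph V) : ℕ :=
  sSup {n : ℕ | ∃ v, G.cr v = (n : ℕ∞)}

/-- `F_∞`: equal to `F_{γ+1}` where `γ` is the largest finite corner rank, and
the identity (`F₁`) when no vertex has finite corner rank. -/
noncomputable def Finf (G : RefGraph V) : V → Set V :=
  G.Fk (G.gammaMax + 1)

/-- `e` lists the vertices as a dismantling ordering: every vertex except the
last is cornered, in the induced subgraph on it and the later vertices, by some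
later vertex. -/
def IsDismantlingOrdering (G : RefGraph V) {n : ℕ} (e : Fin n ≃ V) : Prop :=
  ∀ i : Fin n, (i : ℕ) + 1 < n →
    ∃ j : Fin n, i < j ∧ e j ≠ e i ∧
      ∀ u, (∃ m : Fin n, i ≤ m ∧ e m = u) → G.Adj (e i) u → G.Adj (e j) u

/-- `G` has a dismantling ordering. -/
def HasDismantling (G : RefGraph V) [Fintype V] : Prop :=
  ∃ e : Fin (Fintype.card V) ≃ V, G.IsDismantlingOrdering e

variable (G : RefGraph V)

lemma mem_lvl_succ {v : V} {k : ℕ} :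
    v ∈ G.lvl (k+1) ↔ v ∈ G.lvl k ∧ ¬ G.IsStrictCorner (G.lvl k) v := Iff.rfl

lemma lvl_succ_subset (k : ℕ) : G.lvl (k+1) ⊆ G.lvl k := fun _ hv => hv.1

lemma lvl_subset_of_le {m n : ℕ} (h : m ≤ n) : G.lvl n ⊆ G.lvl m := by
  induction n with
  | zero => have : m = 0 := by omega
            subst this; exact subset_rfl
  | succ n ih =>
    rcases Nat.lt_or_ge m (n+1) with h' | h'
    · exact (G.lvl_succ_subset n).trans (ih (by omega))
    · have : m = n + 1 := le_antisymm h h'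
      subst this; exact subset_rfl

lemma cr_le_of {v : V} {m : ℕ} (h1 : v ∈ G.lvl m)
    (h2 : G.IsStrictCorner (G.lvl m) v ∨ G.IsCliqueSet (G.lvl m)) :
    G.cr v ≤ (m : ℕ∞) + 1 :=
  sInf_le ⟨m, rfl, h1, h2⟩

lemma one_le_cr (v : V) : 1 ≤ G.cr v := by
  apply le_sInf
  rintro n ⟨m, rfl, -⟩
  calc (1:ℕ∞) = 0 + 1 := by simp
  _ ≤ (m:ℕ∞) + 1 := by gcongr; exact zero_le

/-- Characterization: `cr v ≥ k+1` iff `v` survives `k` rounds and no earlier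
level is a clique. -/
lemma ch {k : ℕ} {v : V} :
    ((k:ℕ∞) + 1 ≤ G.cr v) ↔
      v ∈ G.lvl k ∧ ∀ m < k, ¬ G.IsCliqueSet (G.lvl m) := by
  constructor
  · intro h
    induction k with
    | zero => exact ⟨trivial, by omega⟩
    | succ k ih =>
      have hk : (k:ℕ∞) + 1 ≤ G.cr v := by
        refine le_trans ?_ h
        exact_mod_cast Nat.le_succ (k+1)
      obtain ⟨hvk, hno⟩ := ih hk
      have hnn : ¬ (((k:ℕ∞)+1)+1 ≤ (k:ℕ∞)+1) := by
        exact_mod_cast Nat.not_succ_le_self (k+1)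
      have hnotk : ¬ G.IsCliqueSet (G.lvl k) := by
        intro hcl
        exact hnn (le_trans (by exact_mod_cast h) (G.cr_le_of hvk (Or.inr hcl)))
      have hvk1 : v ∈ G.lvl (k+1) := by
        by_contra hv1
        have hcor : G.IsStrictCorner (G.lvl k) v := by
          by_contra hc; exact hv1 ⟨hvk, hc⟩
        exact hnn (le_trans (by exact_mod_cast h) (G.cr_le_of hvk (Or.inl hcor)))
      refine ⟨hvk1, fun m hm => ?_⟩
      rcases Nat.lt_or_ge m k with h' | h'
      · exact hno m h'
      · have : m = k := by omega
        subst this; exact hnotk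
  · rintro ⟨hv, hno⟩
    apply le_sInf
    rintro n ⟨m, rfl, hm, hd⟩
    have hkm : k ≤ m := by
      by_contra hlt
      push_neg at hlt
      rcases hd with hcor | hcl
      · have : v ∈ G.lvl (m+1) := G.lvl_subset_of_le (by omega) hv
        exact this.2 hcor
      · exact hno m hlt hcl
    exact_mod_cast Nat.succ_le_succ hkm
/-- A strictly cornered vertex has a cornering witness that survives to the
next level (choose a witness with maximal closed neighborhood). -/
lemma exists_wit [Fintype V] {v : V} {m : ℕ} (h1 : v ∈ G.lvl m)
    (h2 : v ∉ G.lvl (m+1)) :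
    ∃ w ∈ G.lvl (m+1), G.StrictCornersIn (G.lvl m) w v := by
  classical
  have hc : G.IsStrictCorner (G.lvl m) v := by
    by_contra hc; exact h2 ⟨h1, hc⟩
  obtain ⟨w₀, hw₀⟩ := hc
  -- the set of witnesses, as a finset
  let T : Finset V := Finset.univ.filter (fun w => G.StrictCornersIn (G.lvl m) w v)
  have hT : w₀ ∈ T := by simp [T, hw₀]
  -- the "neighborhood size" function
  let f : V → ℕ := fun w => (Finset.univ.filter (fun u => u ∈ G.lvl m ∧ G.Adj w u)).card
  obtain ⟨w, hwT, hwmax⟩ := T.exists_max_image f ⟨w₀, hT⟩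
  have hw : G.StrictCornersIn (G.lvl m) w v := by
    simpa [T] using hwT
  refine ⟨w, ?_, hw⟩
  refine ⟨hw.1, fun hcor => ?_⟩
  obtain ⟨x, hx⟩ := hcor
  -- x strictly corners v as well, with strictly larger neighborhood
  have hxT : x ∈ T := by
    refine Finset.mem_filter.2 ⟨Finset.mem_univ _, hx.1, hw.2.1, ?_, ?_⟩
    · intro u hu hvu
      exact hx.2.2.1 u hu (hw.2.2.1 u hu hvu)
    · obtain ⟨u, hu, hxu, hwu⟩ := hx.2.2.2
      exact ⟨u, hu, hxu, fun hvu => hwu (hw.2.2.1 u hu hvu)⟩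
  have hlt : f w < f x := by
    apply Finset.card_lt_card
    constructor
    · intro u hu
      simp only [Finset.mem_filter] at hu ⊢
      exact ⟨hu.1, hu.2.1, hx.2.2.1 u hu.2.1 hu.2.2⟩
    · intro hsub
      obtain ⟨u, hu, hxu, hwu⟩ := hx.2.2.2
      have : u ∈ Finset.univ.filter (fun u => u ∈ G.lvl m ∧ G.Adj w u) :=
        hsub (by simp [hu, hxu])
      simp only [Finset.mem_filter] at this
      exact hwu this.2.2
  exact absurd (hwmax x hxT) (by omega)

lemma lvl_nonempty [Fintype V] [Nonempty V] (m : ℕ) : (G.lvl m).Nonempty := by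
  induction m with
  | zero => exact ⟨Classical.arbitrary V, trivial⟩
  | succ m ih =>
    obtain ⟨v, hv⟩ := ih
    by_cases h : v ∈ G.lvl (m+1)
    · exact ⟨v, h⟩
    · obtain ⟨w, hw, -⟩ := G.exists_wit hv h
      exact ⟨w, hw⟩

lemma mem_GkSet {v : V} {k : ℕ} : v ∈ G.GkSet k ↔ (k : ℕ∞) ≤ G.cr v := Iff.rfl

lemma GkSet_anti {k l : ℕ} (h : k ≤ l) : G.GkSet l ⊆ G.GkSet k := by
  intro v hv
  rw [mem_GkSet] at hv ⊢
  exact le_trans (by exact_mod_cast h) hv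

section Beta

variable {β : ℕ} (hno : ∀ m < β, ¬ G.IsCliqueSet (G.lvl m))

include hno in
lemma GkSet_eq {k : ℕ} (hk : k ≤ β) : G.GkSet (k+1) = G.lvl k := by
  ext v
  rw [mem_GkSet]
  push_cast
  rw [G.ch]
  constructor
  · exact fun h => h.1
  · exact fun h => ⟨h, fun m hm => hno m (lt_of_lt_of_le hm hk)⟩

include hno in
/-- The first clique level: `lvl β` is a clique. -/
lemma lvl_beta_clique [Fintype V] [Nonempty V]
    (hle : ∀ v, G.cr v ≤ ((β:ℕ∞) + 1)) :
    G.IsCliqueSet (G.lvl β) := by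
  by_contra hncl
  obtain ⟨w, hw⟩ := G.lvl_nonempty (β+1)
  have : ((β+1:ℕ):ℕ∞) + 1 ≤ G.cr w := by
    rw [G.ch]
    refine ⟨hw, fun m hm => ?_⟩
    rcases Nat.lt_or_ge m β with h' | h'
    · exact hno m h'
    · have : m = β := by omega
      subst this; exact hncl
  have h2 := le_trans this (hle w)
  exact absurd h2 (by exact_mod_cast Nat.not_succ_le_self (β+1))

end Beta
lemma fk_subset {k : ℕ} {u : V} : G.fk k u ⊆ G.GkSet (k+1) := by
  rw [fk]
  split_ifs with h
  · intro x hx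
    rw [Set.mem_singleton_iff] at hx
    subst hx
    rw [mem_GkSet]
    push_cast
    exact Order.add_one_le_of_lt h
  · exact fun x hx => hx.1

lemma fk_adj {k : ℕ} {u x : V} (hx : x ∈ G.fk k u) :
    ∀ w ∈ G.GkSet k, G.Adj u w → G.Adj x w := by
  rw [fk] at hx
  split_ifs at hx with h
  · rw [Set.mem_singleton_iff] at hx; subst hx; exact fun w _ h => h
  · exact hx.2.2.2.1

lemma fk_hom {k : ℕ} {u v x y : V} (hu : u ∈ G.GkSet k) (hv : v ∈ G.GkSet k)
    (h : G.Adj u v) (hx : x ∈ G.fk k u) (hy : y ∈ G.fk k v) : G.Adj x y := by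
  have h1 : G.Adj y u := G.fk_adj hy u hu (G.symm _ _ h)
  have h2 : y ∈ G.GkSet k := G.GkSet_anti (Nat.le_succ k) (G.fk_subset hy)
  exact G.fk_adj hx y h2 (G.symm _ _ h1)

section Beta

variable {β : ℕ} (hno : ∀ m < β, ¬ G.IsCliqueSet (G.lvl m))

include hno in
lemma fk_nonempty [Fintype V] {k : ℕ} {u : V} (hk : k + 1 ≤ β)
    (hu : u ∈ G.GkSet (k+1)) : (G.fk (k+1) u).Nonempty := by
  rw [fk]
  split_ifs with h
  · exact ⟨u, rfl⟩
  · have hG1 : G.GkSet (k+1) = G.lvl k := G.GkSet_eq hno (by omega)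
    have hG2 : G.GkSet (k+2) = G.lvl (k+1) := G.GkSet_eq hno (by omega)
    have hu' : u ∈ G.lvl k := hG1 ▸ hu
    have hnot : u ∉ G.lvl (k+1) := by
      intro hmem
      apply h
      have h2 : ((k+1:ℕ):ℕ∞) + 1 ≤ G.cr u := by
        rw [G.ch]
        exact ⟨hmem, fun m hm => hno m (by omega)⟩
      calc ((k+1:ℕ):ℕ∞) < ((k+1:ℕ):ℕ∞) + 1 := by
            exact_mod_cast Nat.lt_succ_self (k+1)
      _ ≤ G.cr u := h2
    obtain ⟨w, hwmem, hwcorn⟩ := G.exists_wit hu' hnot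
    refine ⟨w, ?_, ?_⟩
    · show w ∈ G.GkSet (k+1+1)
      rw [hG2]; exact hwmem
    · show G.StrictCornersIn (G.GkSet (k+1)) w u
      rw [hG1]; exact hwcorn

include hno in
lemma Fk_subset : ∀ {k : ℕ}, k ≤ β + 1 → ∀ v, G.Fk k v ⊆ G.GkSet k := by
  intro k
  induction k with
  | zero =>
    intro _ v x hx
    rw [show G.Fk 0 v = {v} from rfl, Set.mem_singleton_iff] at hx
    subst hx
    rw [mem_GkSet]
    exact zero_le
  | succ k ih =>
    intro hk v
    match k with
    | 0 =>
      intro x hx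
      rw [show G.Fk 1 v = {v} from rfl, Set.mem_singleton_iff] at hx
      subst hx
      rw [mem_GkSet]
      exact_mod_cast G.one_le_cr _
    | k + 1 =>
      intro x hx
      rw [show G.Fk (k+2) v = ⋃ u ∈ G.Fk (k+1) v, G.fk (k+1) u from rfl] at hx
      simp only [Set.mem_iUnion] at hx
      obtain ⟨u, hu, hxu⟩ := hx
      exact G.fk_subset hxu

include hno in
lemma Fk_nonempty [Fintype V] : ∀ {k : ℕ}, k ≤ β + 1 → ∀ v, (G.Fk k v).Nonempty := by
  intro k
  induction k with
  | zero => exact fun _ v => ⟨v, rfl⟩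
  | succ k ih =>
    intro hk v
    match k with
    | 0 => exact ⟨v, rfl⟩
    | k + 1 =>
      obtain ⟨u, hu⟩ := ih (by omega) v
      have humem : u ∈ G.GkSet (k+1) := G.Fk_subset hno (by omega) v hu
      obtain ⟨x, hx⟩ := G.fk_nonempty hno (by omega) humem
      refine ⟨x, ?_⟩
      rw [show G.Fk (k+2) v = ⋃ u ∈ G.Fk (k+1) v, G.fk (k+1) u from rfl]
      simp only [Set.mem_iUnion]
      exact ⟨u, hu, hx⟩

include hno in
lemma Fk_hom : ∀ {k : ℕ}, k ≤ β + 1 → ∀ {a b : V}, G.Adj a b →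
    ∀ a' ∈ G.Fk k a, ∀ b' ∈ G.Fk k b, G.Adj a' b' := by
  intro k
  induction k with
  | zero =>
    intro _ a b h a' ha' b' hb'
    rw [show G.Fk 0 a = {a} from rfl, Set.mem_singleton_iff] at ha'
    rw [show G.Fk 0 b = {b} from rfl, Set.mem_singleton_iff] at hb'
    subst ha'; subst hb'; exact h
  | succ k ih =>
    intro hk a b h a' ha' b' hb'
    match k with
    | 0 =>
      rw [show G.Fk 1 a = {a} from rfl, Set.mem_singleton_iff] at ha'
      rw [show G.Fk 1 b = {b} from rfl, Set.mem_singleton_iff] at hb'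
      subst ha'; subst hb'; exact h
    | k + 1 =>
      rw [show G.Fk (k+2) a = ⋃ u ∈ G.Fk (k+1) a, G.fk (k+1) u from rfl] at ha'
      rw [show G.Fk (k+2) b = ⋃ u ∈ G.Fk (k+1) b, G.fk (k+1) u from rfl] at hb'
      simp only [Set.mem_iUnion] at ha' hb'
      obtain ⟨u, hu, ha'⟩ := ha'
      obtain ⟨w, hw, hb'⟩ := hb'
      have huG : u ∈ G.GkSet (k+1) := G.Fk_subset hno (by omega) a hu
      have hwG : w ∈ G.GkSet (k+1) := G.Fk_subset hno (by omega) b hw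
      exact G.fk_hom huG hwG (ih (by omega) h u hu w hw) ha' hb'

end Beta

lemma Fk_singleton : ∀ {k : ℕ} {r : V}, ((k:ℕ∞) ≤ G.cr r) → G.Fk k r = {r} := by
  intro k
  induction k with
  | zero => intro r _; rfl
  | succ k ih =>
    intro r hr
    match k with
    | 0 => rfl
    | k + 1 =>
      have hr' : ((k+1:ℕ):ℕ∞) ≤ G.cr r :=
        le_trans (by exact_mod_cast Nat.le_succ (k+1)) hr
      rw [show G.Fk (k+2) r = ⋃ u ∈ G.Fk (k+1) r, G.fk (k+1) u from rfl,
        ih hr', Set.biUnion_singleton, fk, if_pos]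
      calc ((k+1:ℕ):ℕ∞) < ((k+2:ℕ):ℕ∞) := by exact_mod_cast Nat.lt_succ_self (k+1)
      _ ≤ G.cr r := hr
lemma canCatch_mono : ∀ {n : ℕ} {c r : V}, G.CanCatch n c r → G.CanCatch (n+1) c r := by
  intro n
  induction n with
  | zero =>
    intro c r h
    exact Or.inl h
  | succ n ih =>
    intro c r h
    rcases h with h | ⟨c', hc', h⟩
    · exact Or.inl h
    · refine Or.inr ⟨c', hc', ?_⟩
      rcases h with h | h
      · exact Or.inl h
      · exact Or.inr fun r' hr' => ih (h r' hr')

lemma canCatch_of_le {m n : ℕ} (h : m ≤ n) {c r : V} (hc : G.CanCatch m c r) :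
    G.CanCatch n c r := by
  induction n with
  | zero => have : m = 0 := by omega
            subst this; exact hc
  | succ n ih =>
    rcases Nat.lt_or_ge m (n+1) with h' | h'
    · exact G.canCatch_mono (ih (by omega))
    · have : m = n+1 := by omega
      subst this; exact hc

/-- If the cop can move adjacent to a vertex from which she wins within `m`
robber-first rounds, she can catch within `m+1` cop-first moves. -/
lemma catch_of_adj_win : ∀ {m : ℕ} {a b r : V}, G.Adj a b → G.WinWithin m b r →
    G.CanCatch (m+1) a r := by
  intro m
  induction m with
  | zero =>
    intro a b r hab hw
    have : b = r := hw
    subst this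
    exact Or.inr ⟨b, hab, Or.inl rfl⟩
  | succ m ih =>
    intro a b r hab hw
    rcases hw with h | h
    · subst h; exact Or.inr ⟨b, hab, Or.inl rfl⟩
    · refine Or.inr ⟨b, hab, Or.inr fun r' hr' => ?_⟩
      obtain ⟨c₂, hc₂, hw₂⟩ := h r' hr'
      exact ih hc₂ hw₂

lemma catch_of_win : ∀ {n : ℕ} {c r : V}, G.WinWithin n c r → G.CanCatch n c r := by
  intro n
  induction n with
  | zero => exact fun h => h
  | succ n _ =>
    intro c r hw
    rcases hw with h | h
    · exact Or.inl h
    · obtain ⟨c₁, hc₁, hw₁⟩ := h r (G.refl r)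
      exact G.catch_of_adj_win hc₁ hw₁

section Beta

variable {β : ℕ} (hno : ∀ m < β, ¬ G.IsCliqueSet (G.lvl m))

include hno in
/-- Cop descent: a `k`-cornered robber is caught within `k` more moves. -/
lemma win_of_kCornered [Fintype V] : ∀ {k : ℕ}, k ≤ β → ∀ {c r : V},
    G.kCornered k c r → G.WinWithin k c r := by
  intro k
  induction k with
  | zero =>
    intro _ c r h
    exact h
  | succ k ih =>
    intro hk c r hcor
    obtain ⟨r', hr', hdom⟩ := hcor
    match k with
    | 0 =>
      -- `r' = r` and the cop dominates all of `N[r]`.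
      rw [show G.Fk 1 r = {r} from rfl, Set.mem_singleton_iff] at hr'
      subst hr'
      refine Or.inr fun r₁ hr₁ => ⟨r₁, ?_, rfl⟩
      refine hdom r₁ (Or.inl ?_) hr₁
      rw [mem_GkSet]
      exact_mod_cast G.one_le_cr r₁
    | k + 1 =>
      refine Or.inr fun r₁ hr₁ => ?_
      obtain ⟨u₁, hu₁⟩ := G.Fk_nonempty hno (show k + 1 ≤ β + 1 by omega) r₁
      have hu₁G : u₁ ∈ G.GkSet (k+1) := G.Fk_subset hno (by omega) r₁ hu₁
      obtain ⟨c₁, hc₁⟩ := G.fk_nonempty hno (by omega) hu₁G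
      have hc₁F : c₁ ∈ G.Fk (k+2) r₁ := by
        rw [show G.Fk (k+2) r₁ = ⋃ u ∈ G.Fk (k+1) r₁, G.fk (k+1) u from rfl]
        simp only [Set.mem_iUnion]
        exact ⟨u₁, hu₁, hc₁⟩
      have hadj : G.Adj r' c₁ := G.Fk_hom hno (by omega) hr₁ r' hr' c₁ hc₁F
      have hc₁G : c₁ ∈ G.GkSet (k+2) := G.fk_subset hc₁
      have hcc₁ : G.Adj c c₁ := hdom c₁ (Or.inl hc₁G) hadj
      refine ⟨c₁, hcc₁, ih (by omega) ⟨u₁, hu₁, ?_⟩⟩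
      intro u hu hadj'
      rcases hu with hu | hu
      · exact G.fk_adj hc₁ u hu hadj'
      · subst hu; exact G.refl _

end Beta
section Beta2

variable {β : ℕ} (hno : ∀ m < β, ¬ G.IsCliqueSet (G.lvl m))

include hno in
/-- Robber descent: from a `(k+1)`-proj-safe position, whatever the cop's move,
the robber can move to a `k`-proj-safe position. -/
lemma projSafe_step [Fintype V] {k : ℕ} (hk1 : 1 ≤ k) (hkβ : k ≤ β)
    {c c₁ r c' : V}
    (hcr : ((k:ℕ∞) + 1) ≤ G.cr r)
    (hc' : c' ∈ G.Fk (k+1) c) (hnadj : ¬ G.Adj c' r) (hcc₁ : G.Adj c c₁) :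
    ∃ r₁, G.Adj r r₁ ∧ G.ProjSafe k c₁ r₁ := by
  by_contra hcon
  push_neg at hcon
  obtain ⟨j, rfl⟩ : ∃ j, k = j + 1 := ⟨k - 1, by omega⟩
  obtain ⟨c'', hc''⟩ := G.Fk_nonempty hno (show j + 1 ≤ β + 1 by omega) c₁
  have hc''G : c'' ∈ G.GkSet (j+1) := G.Fk_subset hno (by omega) c₁ hc''
  have hrG : r ∈ G.GkSet (j+1) := by
    rw [mem_GkSet]
    have h2 : ((j+1:ℕ):ℕ∞) + 1 ≤ G.cr r := by exact_mod_cast hcr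
    exact le_trans le_self_add h2
  have hdom : ∀ u, u ∈ G.GkSet (j+1) → G.Adj r u → G.Adj c'' u := by
    intro u huG hru
    by_contra hne
    exact hcon u hru ⟨huG, ⟨c'', hc'', hne⟩⟩
  have hrlvl : r ∈ G.lvl (j+1) := ((G.ch).1 (by exact_mod_cast hcr)).1
  have hGkeq : G.GkSet (j+1) = G.lvl j := G.GkSet_eq hno (by omega)
  have hnostrict : ¬ G.IsStrictCorner (G.GkSet (j+1)) r := by
    rw [hGkeq]
    exact (G.mem_lvl_succ.1 hrlvl).2
  by_cases hceq : c'' = r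
  · -- the projection of the cop's new position contains `r` itself
    subst hceq
    have hfk : G.fk (j+1) c'' = {c''} := by
      rw [fk, if_pos]
      calc ((j+1:ℕ):ℕ∞) < ((j+1:ℕ):ℕ∞) + 1 := by
            exact_mod_cast Nat.lt_succ_self (j+1)
      _ ≤ G.cr c'' := by exact_mod_cast hcr
    have hmem : c'' ∈ G.Fk (j+2) c₁ := by
      rw [show G.Fk (j+2) c₁ = ⋃ u ∈ G.Fk (j+1) c₁, G.fk (j+1) u from rfl]
      simp only [Set.mem_iUnion]
      exact ⟨c'', hc'', by rw [hfk]; rfl⟩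
    exact hnadj (G.Fk_hom hno (by omega) hcc₁ c' hc' c'' hmem)
  · by_cases hstrict : ∃ u ∈ G.GkSet (j+1), G.Adj c'' u ∧ ¬ G.Adj r u
    · -- `c''` strictly corners `r`: impossible
      exact hnostrict ⟨c'', hc''G, hrG, hdom, hstrict⟩
    · push_neg at hstrict
      -- `c''` and `r` are twins on `G_{j+1}`
      obtain ⟨x, hx⟩ := G.fk_nonempty hno (by omega) hc''G
      have hxF : x ∈ G.Fk (j+2) c₁ := by
        rw [show G.Fk (j+2) c₁ = ⋃ u ∈ G.Fk (j+1) c₁, G.fk (j+1) u from rfl]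
        simp only [Set.mem_iUnion]
        exact ⟨c'', hc'', hx⟩
      have hc'x : G.Adj c' x := G.Fk_hom hno (by omega) hcc₁ c' hc' x hxF
      by_cases hbr : ((j+1:ℕ):ℕ∞) < G.cr c''
      · have hxeq : x = c'' := by
          rw [fk, if_pos hbr, Set.mem_singleton_iff] at hx
          exact hx
        subst hxeq
        have hc'G : c' ∈ G.GkSet (j+1) :=
          G.GkSet_anti (Nat.le_succ _) (G.Fk_subset hno (by omega) c hc')
        exact hnadj (G.symm _ _ (hstrict c' hc'G (G.symm _ _ hc'x)))
      · have hxc : x ∈ G.GkSet (j+2) ∧ G.StrictCornersIn (G.GkSet (j+1)) x c'' := by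
          rw [fk, if_neg hbr] at hx
          exact hx
        obtain ⟨u₀, hu₀G, hxu₀, hcu₀⟩ := hxc.2.2.2.2
        refine hnostrict ⟨x, G.GkSet_anti (Nat.le_succ _) hxc.1, hrG, ?_, u₀, hu₀G, hxu₀, ?_⟩
        · intro u huG hru
          exact hxc.2.2.2.1 u huG (hdom u huG hru)
        · intro hru₀
          exact hcu₀ (hdom u₀ hu₀G hru₀)

include hno in
/-- A `k`-proj-safe robber survives `k` cop moves. -/
lemma projSafe_not_catch [Fintype V] : ∀ {k : ℕ}, 1 ≤ k → k ≤ β + 1 →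
    ∀ {c r : V}, G.ProjSafe k c r → ¬ G.CanCatch k c r := by
  intro k
  induction k with
  | zero => omega
  | succ k ih =>
    intro _ hk c r hps hcatch
    obtain ⟨hcr, c', hc', hnadj⟩ := hps
    have hcne : c ≠ r := by
      intro h
      subst h
      have hsing : G.Fk (k+1) c = {c} := G.Fk_singleton hcr
      rw [hsing, Set.mem_singleton_iff] at hc'
      rw [hc'] at hnadj
      exact hnadj (G.refl _)
    rcases hcatch with h | ⟨c₁, hcc₁, h⟩
    · exact hcne h
    have hc₁ne : c₁ ≠ r := by
      intro heq
      subst heq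
      have hsing : G.Fk (k+1) c₁ = {c₁} := G.Fk_singleton hcr
      refine hnadj (G.Fk_hom hno hk hcc₁ c' hc' c₁ ?_)
      rw [hsing]; rfl
    rcases h with h | h
    · exact hc₁ne h
    match k, ih with
    | 0, _ => exact hc₁ne (h r (G.refl r))
    | k+1, ih =>
      obtain ⟨r₁, hrr₁, hps₁⟩ :=
        G.projSafe_step hno (show 1 ≤ k + 1 by omega) (show k + 1 ≤ β by omega)
          (by exact_mod_cast hcr) hc' hnadj hcc₁
      exact ih (by omega) (by omega) hps₁ (h r₁ hrr₁)

end Beta2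
lemma dominator_mem_succ {m : ℕ} {d : V} (hd : d ∈ G.lvl m)
    (hdom : ∀ u ∈ G.lvl m, G.Adj d u) : d ∈ G.lvl (m+1) := by
  refine ⟨hd, ?_⟩
  rintro ⟨w, -, -, -, u, hu, -, hdu⟩
  exact hdu (hdom u hu)

lemma clique_of_dominator {m : ℕ} {d : V} (hd : d ∈ G.lvl m)
    (hdom : ∀ u ∈ G.lvl m, G.Adj d u) : G.IsCliqueSet (G.lvl (m+1)) := by
  intro u hu v hv
  by_contra hne
  exact hu.2 ⟨d, hd, hu.1, fun y hy _ => hdom y hy, v, hv.1, hdom v hv.1, hne⟩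

section Main

variable {β : ℕ} (hβ1 : 1 ≤ β) (hno : ∀ m < β, ¬ G.IsCliqueSet (G.lvl m))
  (hle : ∀ v, G.cr v ≤ ((β:ℕ∞) + 1))

include hβ1 hno hle in
lemma cop_r0 [Fintype V] [Nonempty V] {x : V} (hx : G.cr x = ((β:ℕ∞) + 1)) :
    ∀ r₀, G.CanCatch (β+1) x r₀ := by
  intro r₀
  obtain ⟨γ, rfl⟩ : ∃ γ, β = γ + 1 := ⟨β - 1, by omega⟩
  obtain ⟨r', hr'⟩ := G.Fk_nonempty hno (show γ + 1 ≤ γ + 1 + 1 by omega) r₀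
  have hr'G : r' ∈ G.GkSet (γ+1) := G.Fk_subset hno (by omega) r₀ hr'
  obtain ⟨c₁, hc₁⟩ := G.fk_nonempty hno le_rfl hr'G
  have hc₁G : c₁ ∈ G.GkSet (γ+2) := G.fk_subset hc₁
  have hGk : G.GkSet (γ+2) = G.lvl (γ+1) := G.GkSet_eq hno le_rfl
  have hclq : G.IsCliqueSet (G.lvl (γ+1)) := G.lvl_beta_clique hno hle
  have hxG : x ∈ G.lvl (γ+1) := by
    rw [← hGk, mem_GkSet, hx]
    push_cast
    exact le_rfl
  have hadjx : G.Adj x c₁ := hclq x hxG c₁ (hGk ▸ hc₁G)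
  have hcor : G.kCornered (γ+1) c₁ r₀ := by
    refine ⟨r', hr', fun u hu hadj => ?_⟩
    rcases hu with hu | hu
    · exact G.fk_adj hc₁ u hu hadj
    · subst hu; exact G.refl _
  exact G.catch_of_adj_win hadjx (G.win_of_kCornered hno le_rfl hcor)

include hβ1 hno hle in
lemma cop_r1 [Fintype V] [Nonempty V] (h1 : G.OneCopWin (β+1)) :
    ∃ c₀, ∀ r₀, G.CanCatch β c₀ r₀ := by
  obtain ⟨x, hx, hxdom⟩ := h1
  refine ⟨x, fun r₀ => ?_⟩
  obtain ⟨γ, rfl⟩ : ∃ γ, β = γ + 1 := ⟨β - 1, by omega⟩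
  obtain ⟨r', hr'⟩ := G.Fk_nonempty hno (show γ + 1 ≤ γ + 1 + 1 by omega) r₀
  have hcor : G.kCornered (γ+1) x r₀ := by
    refine ⟨r', hr', fun u hu _ => ?_⟩
    rcases hu with hu | hu
    · refine hxdom u ?_
      rw [mem_GkSet] at hu
      simpa using hu
    · subst hu; exact G.refl _
  exact G.catch_of_win (G.win_of_kCornered hno le_rfl hcor)

include hβ1 hno hle in
lemma robber_r0 [Fintype V] [Nonempty V] (hncw : ¬ G.OneCopWin (β+1)) :
    ∀ c₀, ∃ r₀, ¬ G.CanCatch β c₀ r₀ := by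
  intro c₀
  obtain ⟨c', hc'⟩ := G.Fk_nonempty hno (show β ≤ β + 1 by omega) c₀
  have hc'G : c' ∈ G.GkSet β := G.Fk_subset hno (by omega) c₀ hc'
  by_cases hdom : ∃ r₀ ∈ G.GkSet β, ¬ G.Adj c' r₀
  · obtain ⟨r₀, hr₀G, hnadj⟩ := hdom
    exact ⟨r₀, G.projSafe_not_catch hno hβ1 (by omega) ⟨hr₀G, c', hc', hnadj⟩⟩
  · exfalso
    push_neg at hdom
    apply hncw
    obtain ⟨γ, rfl⟩ : ∃ γ, β = γ + 1 := ⟨β - 1, by omega⟩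
    have hGk : G.GkSet (γ+1) = G.lvl γ := G.GkSet_eq hno (by omega)
    have hc'lvl : c' ∈ G.lvl γ := hGk ▸ hc'G
    have hdom' : ∀ u ∈ G.lvl γ, G.Adj c' u := fun u hu => hdom u (hGk ▸ hu)
    have hc'succ : c' ∈ G.lvl (γ+1) := G.dominator_mem_succ hc'lvl hdom'
    have hcr : ((γ+1:ℕ):ℕ∞) + 1 ≤ G.cr c' := by
      rw [G.ch]
      exact ⟨hc'succ, hno⟩
    refine ⟨c', le_antisymm (by exact_mod_cast hle c') (by exact_mod_cast hcr), ?_⟩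
    intro u hu
    refine hdom u ?_
    rw [mem_GkSet]
    simpa using hu

include hβ1 hno in
lemma robber_r1 [Fintype V] [Nonempty V] :
    ∀ c₀, ∃ r₀, ¬ G.CanCatch (β - 1) c₀ r₀ := by
  intro c₀
  match β, hβ1, hno with
  | 0, hβ1, _ => omega
  | 1, _, hno =>
    have hncl : ¬ G.IsCliqueSet (G.lvl 0) := hno 0 (by omega)
    unfold IsCliqueSet at hncl
    push_neg at hncl
    obtain ⟨a, _, b, _, hab⟩ := hncl
    by_cases hac : a = c₀
    · refine ⟨b, fun h => ?_⟩
      have : c₀ = b := h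
      subst hac; subst this
      exact hab (G.refl _)
    · exact ⟨a, fun h => hac (h : c₀ = a).symm⟩
  | γ+2, _, hno =>
    obtain ⟨c'', hc''⟩ := G.Fk_nonempty hno (show γ + 1 ≤ γ + 2 + 1 by omega) c₀
    have hc''G : c'' ∈ G.GkSet (γ+1) := G.Fk_subset hno (by omega) c₀ hc''
    by_cases hdom : ∃ r₀ ∈ G.GkSet (γ+1), ¬ G.Adj c'' r₀
    · obtain ⟨r₀, hr₀G, hnadj⟩ := hdom
      exact ⟨r₀, G.projSafe_not_catch hno (by omega) (by omega) ⟨hr₀G, c'', hc'', hnadj⟩⟩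
    · exfalso
      push_neg at hdom
      have hGk : G.GkSet (γ+1) = G.lvl γ := G.GkSet_eq hno (by omega)
      have hclq : G.IsCliqueSet (G.lvl (γ+1)) :=
        G.clique_of_dominator (hGk ▸ hc''G) (fun u hu => hdom u (hGk ▸ hu))
      exact hno (γ+1) (by omega) hclq

end Main

lemma capt_eq_of [Fintype V] {a : ℕ}
    (hmem : ∃ c₀, ∀ r₀, G.CanCatch a c₀ r₀)
    (hnot : ∀ c₀, ∃ r₀, ¬ G.CanCatch (a-1) c₀ r₀) : G.capt = a := by
  have ha : 1 ≤ a := by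
    by_contra h
    have : a = 0 := by omega
    subst this
    obtain ⟨c₀, hc₀⟩ := hmem
    obtain ⟨r₀, hr₀⟩ := hnot c₀
    exact hr₀ (hc₀ r₀)
  have hS : a ∈ {n | ∃ c₀, ∀ r₀, G.CanCatch n c₀ r₀} := hmem
  unfold capt
  refine le_antisymm (Nat.sInf_le hS) ?_
  by_contra hlt
  push_neg at hlt
  have hmm := Nat.sInf_mem (⟨a, hS⟩ : {n | ∃ c₀, ∀ r₀, G.CanCatch n c₀ r₀}.Nonempty)
  obtain ⟨c₀, hc₀⟩ := hmm
  obtain ⟨r₀, hr₀⟩ := hnot c₀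
  exact hr₀ (G.canCatch_of_le (by omega) (hc₀ r₀))

/-- One step of the corner-dismantling retraction. -/
noncomputable def stepMap [Fintype V] (m : ℕ) (u : V) : V :=
  if h : u ∈ G.lvl m ∧ u ∉ G.lvl (m+1) then
    Classical.choose (G.exists_wit h.1 h.2)
  else u

lemma stepMap_mem [Fintype V] {m : ℕ} {u : V} (hu : u ∈ G.lvl m) :
    G.stepMap m u ∈ G.lvl (m+1) := by
  unfold stepMap
  split_ifs with h
  · exact (Classical.choose_spec (G.exists_wit h.1 h.2)).1
  · push_neg at h
    exact h hu

lemma stepMap_adj [Fintype V] {m : ℕ} {u : V} (hu : u ∈ G.lvl m)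
    {x : V} (hx : x ∈ G.lvl m) (hadj : G.Adj u x) : G.Adj (G.stepMap m u) x := by
  unfold stepMap
  split_ifs with h
  · exact (Classical.choose_spec (G.exists_wit h.1 h.2)).2.2.2.1 x hx hadj
  · exact hadj

lemma stepMap_id [Fintype V] {m : ℕ} {u : V} (hu : u ∈ G.lvl (m+1)) :
    G.stepMap m u = u := by
  unfold stepMap
  rw [dif_neg]
  intro h
  exact h.2 hu

/-- The corner-dismantling retraction onto `lvl m`. -/
noncomputable def chainMap [Fintype V] (m : ℕ) : V → V :=
  Nat.rec (motive := fun _ => V → V) (fun v => v) (fun m f v => G.stepMap m (f v)) m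

lemma chainMap_zero [Fintype V] (v : V) : G.chainMap 0 v = v := rfl

lemma chainMap_succ [Fintype V] (m : ℕ) (v : V) :
    G.chainMap (m+1) v = G.stepMap m (G.chainMap m v) := rfl

lemma chainMap_mem [Fintype V] (m : ℕ) (v : V) : G.chainMap m v ∈ G.lvl m := by
  induction m with
  | zero => trivial
  | succ m ih => exact G.stepMap_mem ih

lemma chainMap_hom [Fintype V] (m : ℕ) {u v : V} (h : G.Adj u v) :
    G.Adj (G.chainMap m u) (G.chainMap m v) := by
  induction m with
  | zero => exact h
  | succ m ih =>
    have hu := G.chainMap_mem m u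
    have hv := G.chainMap_mem m v
    have h1 : G.Adj (G.stepMap m (G.chainMap m u)) (G.chainMap m v) :=
      G.stepMap_adj hu hv ih
    have h2 : G.stepMap m (G.chainMap m u) ∈ G.lvl m :=
      G.lvl_succ_subset m (G.stepMap_mem hu)
    rw [chainMap_succ, chainMap_succ]
    exact G.symm _ _ (G.stepMap_adj hv h2 (G.symm _ _ h1))

lemma chainMap_fix [Fintype V] {M : ℕ} {v : V} (hv : v ∈ G.lvl M) :
    ∀ m ≤ M, G.chainMap m v = v := by
  intro m hm
  induction m with
  | zero => rfl
  | succ m ih =>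
    rw [chainMap_succ, ih (by omega)]
    exact G.stepMap_id (G.lvl_subset_of_le hm hv)

lemma robber_escape [Fintype V] {M : ℕ} (hstab : G.lvl (M+1) = G.lvl M) :
    ∀ n (c r : V), r ∈ G.lvl M → ¬ G.Adj (G.chainMap M c) r → ¬ G.CanCatch n c r := by
  have nocorner : ∀ v ∈ G.lvl M, ¬ G.IsStrictCorner (G.lvl M) v := by
    intro v hv hc
    have : v ∈ G.lvl (M+1) := hstab.symm ▸ hv
    exact this.2 hc
  intro n
  induction n with
  | zero =>
    intro c r hr hnadj h
    have hcr : c = r := h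
    rw [hcr, G.chainMap_fix hr M le_rfl] at hnadj
    exact hnadj (G.refl r)
  | succ n ih =>
    rintro c r hr hnadj (h | ⟨c₁, hcc₁, h⟩)
    · rw [h, G.chainMap_fix hr M le_rfl] at hnadj
      exact hnadj (G.refl r)
    · have hdd₁ : G.Adj (G.chainMap M c) (G.chainMap M c₁) := G.chainMap_hom M hcc₁
      have hd₁mem : G.chainMap M c₁ ∈ G.lvl M := G.chainMap_mem M c₁
      rcases h with h | h
      · rw [h, G.chainMap_fix hr M le_rfl] at hdd₁
        exact hnadj hdd₁
      · have key : ∃ r₁ ∈ G.lvl M, G.Adj r r₁ ∧ ¬ G.Adj (G.chainMap M c₁) r₁ := by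
          by_contra hcon
          push_neg at hcon
          by_cases hstrict : ∃ u ∈ G.lvl M, G.Adj (G.chainMap M c₁) u ∧ ¬ G.Adj r u
          · exact nocorner r hr ⟨G.chainMap M c₁, hd₁mem, hr, hcon, hstrict⟩
          · push_neg at hstrict
            have h1 : G.Adj (G.chainMap M c₁) (G.chainMap M c) := G.symm _ _ hdd₁
            have h2 : G.Adj r (G.chainMap M c) :=
              hstrict (G.chainMap M c) (G.chainMap_mem M c) h1
            exact hnadj (G.symm _ _ h2)
        obtain ⟨r₁, hr₁M, hrr₁, hnadj₁⟩ := key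
        exact ih c₁ r₁ hr₁M hnadj₁ (h r₁ hrr₁)

lemma exists_safe [Fintype V] {M : ℕ} (hstab : G.lvl (M+1) = G.lvl M)
    (hncl : ¬ G.IsCliqueSet (G.lvl M)) (c : V) :
    ∃ r ∈ G.lvl M, ¬ G.Adj (G.chainMap M c) r := by
  by_contra hcon
  push_neg at hcon
  unfold IsCliqueSet at hncl
  push_neg at hncl
  obtain ⟨a, ha, b, hb, hab⟩ := hncl
  have hd : G.chainMap M c ∈ G.lvl M := G.chainMap_mem M c
  have : a ∈ G.lvl (M+1) := hstab.symm ▸ ha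
  exact this.2 ⟨G.chainMap M c, hd, ha, fun y hy _ => hcon y hy, b, hb, hcon b hb, hab⟩
end RefGraph

/-- A graph is cop-win iff it has finite corner rank; moreover if
`G` is `r`-cop-win (`r ∈ {0,1}`) of finite corner rank `α ≥ 2`, then
`capt(G) = α - r`. -/
theorem cop_win_iff_finite_rank_and_capture_time
    {V : Type*} [Fintype V] [Nonempty V] (G : RefGraph V) :
    (G.CopWin ↔ G.crGraph ≠ ⊤) ∧
    ∀ α r : ℕ, 2 ≤ α → G.crGraph = (α : ℕ∞) → G.RCopWin r α →
      G.capt = α - r := by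
  classical
  have hsup : ∀ v : V, G.cr v ≤ G.crGraph := fun v =>
    Finset.le_sup (f := fun v => G.cr v) (Finset.mem_univ v)
  have hex_sup : ∃ x : V, G.crGraph = G.cr x := by
    obtain ⟨x, -, hx⟩ := Finset.exists_mem_eq_sup Finset.univ
      Finset.univ_nonempty (fun v => G.cr v)
    exact ⟨x, hx⟩
  constructor
  · constructor
    · -- cop-win implies finite corner rank
      intro hcw htop
      have hvex : ∃ v : V, G.cr v = ⊤ := by
        by_contra hv
        push_neg at hv
        have hlt : G.crGraph < ⊤ := by
          rw [RefGraph.crGraph, Finset.sup_lt_iff (by simp : (⊥:ℕ∞) < ⊤)]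
          intro v _
          exact lt_of_le_of_ne le_top (hv v)
        rw [htop] at hlt
        exact lt_irrefl _ hlt
      obtain ⟨v₀, hv₀⟩ := hvex
      have htople : ∀ m : ℕ, ¬ ((⊤:ℕ∞) ≤ (m:ℕ∞)+1) := by
        intro m h
        have : ((m:ℕ∞)+1) ≠ ⊤ := by
          push_cast
          exact ENat.coe_ne_top (m+1)
        exact this (top_le_iff.1 h)
      have hmemall : ∀ m, v₀ ∈ G.lvl m := by
        intro m
        induction m with
        | zero => trivial
        | succ m ih =>
          by_contra hns
          have hcor : G.IsStrictCorner (G.lvl m) v₀ := by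
            by_contra hc
            exact hns ⟨ih, hc⟩
          have hcle := G.cr_le_of ih (Or.inl hcor)
          rw [hv₀] at hcle
          exact htople m hcle
      obtain ⟨M, hM⟩ : ∃ M, ((G.lvl M).ncard = sInf (Set.range fun m => (G.lvl m).ncard)) := by
        obtain ⟨M, hM⟩ := Nat.sInf_mem (Set.range_nonempty (fun m => (G.lvl m).ncard))
        exact ⟨M, hM⟩
      have hstab : G.lvl (M+1) = G.lvl M := by
        apply Set.eq_of_subset_of_ncard_le (G.lvl_succ_subset M)
        rw [hM]
        exact Nat.sInf_le ⟨M+1, rfl⟩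
      have hncl : ¬ G.IsCliqueSet (G.lvl M) := by
        intro hcl
        have hcle := G.cr_le_of (hmemall M) (Or.inr hcl)
        rw [hv₀] at hcle
        exact htople M hcle
      obtain ⟨n, c₀, hc₀⟩ := hcw
      obtain ⟨r₀, hr₀M, hnadj⟩ := G.exists_safe hstab hncl c₀
      exact G.robber_escape hstab n c₀ r₀ hr₀M hnadj (hc₀ r₀)
    · -- finite corner rank implies cop-win
      intro hfin
      obtain ⟨α, hα⟩ := WithTop.ne_top_iff_exists.1 hfin
      have hα' : G.crGraph = ((α:ℕ):ℕ∞) := hα.symm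
      have hα1 : 1 ≤ α := by
        have h1 : (1:ℕ∞) ≤ G.crGraph :=
          le_trans (G.one_le_cr (Classical.arbitrary V)) (hsup _)
        rw [hα'] at h1
        exact_mod_cast h1
      obtain ⟨β, rfl⟩ : ∃ β, α = β + 1 := ⟨α - 1, by omega⟩
      have hle : ∀ v, G.cr v ≤ ((β:ℕ∞) + 1) := by
        intro v
        have := hsup v
        rw [hα'] at this
        exact_mod_cast this
      obtain ⟨x, hx⟩ := hex_sup
      have hx' : G.cr x = ((β:ℕ∞) + 1) := by
        rw [← hx, hα']
        push_cast
        rfl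
      have hno : ∀ m < β, ¬ G.IsCliqueSet (G.lvl m) := by
        have hch := (G.ch (k := β) (v := x)).1 (le_of_eq hx'.symm)
        exact hch.2
      match β, hno, hle with
      | 0, hno, hle =>
        have hclq : G.IsCliqueSet (G.lvl 0) := G.lvl_beta_clique hno hle
        refine ⟨1, Classical.arbitrary V, fun r₀ => Or.inr ⟨r₀, ?_, Or.inl rfl⟩⟩
        exact hclq _ (Set.mem_univ _) _ (Set.mem_univ _)
      | β'+1, hno, hle =>
        exact ⟨β'+1+1, x, G.cop_r0 (by omega) hno hle (by exact_mod_cast hx')⟩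
  · -- capture time
    intro α r hα2 hcr hrcw
    obtain ⟨β, rfl⟩ : ∃ β, α = β + 1 := ⟨α - 1, by omega⟩
    have hβ1 : 1 ≤ β := by omega
    have hle : ∀ v, G.cr v ≤ ((β:ℕ∞) + 1) := by
      intro v
      have := hsup v
      rw [hcr] at this
      exact_mod_cast this
    obtain ⟨x, hx⟩ := hex_sup
    have hx' : G.cr x = ((β:ℕ∞) + 1) := by
      rw [← hx, hcr]
      push_cast
      rfl
    have hno : ∀ m < β, ¬ G.IsCliqueSet (G.lvl m) := by
      have hch := (G.ch (k := β) (v := x)).1 (le_of_eq hx'.symm)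
      exact hch.2
    rcases hrcw with ⟨hr1, hocw⟩ | ⟨hr0, hnocw⟩
    · subst hr1
      have hgoal : β + 1 - 1 = β := by omega
      rw [hgoal]
      refine G.capt_eq_of (G.cop_r1 hβ1 hno hle hocw) ?_
      intro c₀
      exact G.robber_r1 hβ1 hno c₀
    · subst hr0
      have hgoal : β + 1 - 0 = β + 1 := by omega
      rw [hgoal]
      refine G.capt_eq_of ⟨x, G.cop_r0 hβ1 hno hle hx'⟩ ?_
      intro c₀
      have h : β + 1 - 1 = β := by omega
      rw [h]
      exact G.robber_r0 hβ1 hno hle hnocw c₀
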